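/- If X is an oriented graph (a digraph with no digons), then the H-spectrum of X is symmetric about 0: the multiset of eigenvalues of H(X), counted with multiplicity, is invariant under negation. Equivalently, if the eigenvalues are λ₁ ≥ … ≥ λ_n, then λ_j = −λ_{n−j+1} for all j. -/

import Mathlib

open Matrix Complex Polynomial

/-- Hermitian adjacency matrix of a digraph given by its arc relation `E`. -/
def hermAdj {V : Type*} (E : V → V → Prop) [DecidableRel E] : Matrix V V ℂ :=
  fun u v =>
    if E u v ∧ E v u then 1
    else if E u v then Complex.I
    else if E v u then -Complex.I
    else 0

lemma charpoly_transpose_aux {n : Type*} [Fintype n] [DecidableEq n]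
    (A : Matrix n n ℂ) : Aᵀ.charpoly = A.charpoly := by
  have h : charmatrix Aᵀ = (charmatrix A)ᵀ := by
    apply Matrix.ext; intro i j
    by_cases hij : i = j
    · subst hij; simp [Matrix.transpose_apply]
    · rw [charmatrix_apply_ne _ _ _ hij]
      simp only [Matrix.transpose_apply]
      rw [charmatrix_apply_ne _ _ _ (Ne.symm hij)]
  rw [Matrix.charpoly, Matrix.charpoly, h, Matrix.det_transpose]

lemma charpoly_diag_conj {n : Type*} [Fintype n] [DecidableEq n]
    (U : Matrix n n ℂ) (hU : U ∈ Matrix.unitaryGroup n ℂ) (d : n → ℂ) :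
    (U * Matrix.diagonal d * star U).charpoly.roots = Multiset.map d Finset.univ.val := by
  have hUs : U * star U = 1 := (Matrix.mem_unitaryGroup_iff).mp hU
  have hone : (C : ℂ →+* ℂ[X]).mapMatrix U * (C : ℂ →+* ℂ[X]).mapMatrix (star U) = 1 := by
    rw [← _root_.map_mul, hUs, _root_.map_one]
  have hchar : charmatrix (U * Matrix.diagonal d * star U)
      = (C : ℂ →+* ℂ[X]).mapMatrix U * charmatrix (Matrix.diagonal d)
        * (C : ℂ →+* ℂ[X]).mapMatrix (star U) := by
    rw [charmatrix, charmatrix]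
    rw [mul_sub, sub_mul]
    congr 1
    · have : Matrix.scalar n (X : ℂ[X]) = (X : ℂ[X]) • (1 : Matrix n n ℂ[X]) := by
        simp [Matrix.scalar, Matrix.smul_one_eq_diagonal]
      rw [this, Matrix.mul_smul, Matrix.smul_mul, mul_one, hone]
    · rw [← _root_.map_mul, ← _root_.map_mul]
  have hdet : (U * Matrix.diagonal d * star U).charpoly
      = (Matrix.diagonal d).charpoly := by
    rw [Matrix.charpoly, Matrix.charpoly, hchar, Matrix.det_mul, Matrix.det_mul]
    rw [mul_comm (Matrix.det ((C : ℂ →+* ℂ[X]).mapMatrix U)), mul_assoc, ← Matrix.det_mul,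
      hone, Matrix.det_one, mul_one]
  rw [hdet]
  have hdiag : charmatrix (Matrix.diagonal d)
      = Matrix.diagonal (fun i => (X : ℂ[X]) - C (d i)) := by
    apply Matrix.ext; intro i j
    by_cases hij : i = j
    · subst hij; simp
    · rw [charmatrix_apply_ne _ _ _ hij, Matrix.diagonal_apply_ne _ hij,
        Matrix.diagonal_apply_ne _ hij, map_zero, neg_zero]
  rw [Matrix.charpoly, hdiag, Matrix.det_diagonal]
  have : ∏ i, ((X : ℂ[X]) - C (d i))
      = ((Multiset.map d Finset.univ.val).map (fun a => (X : ℂ[X]) - C a)).prod := by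
    rw [Multiset.map_map]
    rfl
  rw [this, Polynomial.roots_multiset_prod_X_sub_C]

/-- If `X` is an oriented graph (a digraph with no digons), then the `H`-spectrum of
`X` is symmetric about `0`: the multiset of eigenvalues of `H(X)` is invariant under
negation. -/
theorem stmt9 {V : Type*} [Fintype V] [DecidableEq V]
    (E : V → V → Prop) [DecidableRel E] (hirr : ∀ v, ¬ E v v)
    (hnodigon : ∀ x y, ¬ (E x y ∧ E y x))
    (hH : (hermAdj E).IsHermitian) :
    Multiset.map hH.eigenvalues Finset.univ.val =
      Multiset.map (fun i => - hH.eigenvalues i) Finset.univ.val := by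
  set A := hermAdj E
  -- A is skew-symmetric: Aᵀ = -A
  have hskew : Aᵀ = -A := by
    ext u v
    simp only [Matrix.transpose_apply, Matrix.neg_apply, A, hermAdj]
    rw [if_neg (hnodigon v u), if_neg (hnodigon u v)]
    by_cases h1 : E v u
    · rw [if_pos h1]
      have h2 : ¬ E u v := fun h2 => hnodigon u v ⟨h2, h1⟩
      rw [if_neg h2, if_pos h1, neg_neg]
    · rw [if_neg h1]
      by_cases h2 : E u v
      · rw [if_pos h2, if_pos h2]
      · rw [if_neg h2, if_neg h2, if_neg h1, neg_zero]
  set U := (hH.eigenvectorUnitary : Matrix V V ℂ)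
  have hU : U ∈ Matrix.unitaryGroup V ℂ := hH.eigenvectorUnitary.2
  have hspec : A = U * Matrix.diagonal (fun i => ((hH.eigenvalues i : ℝ) : ℂ)) * star U := by
    have := hH.spectral_theorem
    convert this using 2
    rw [Unitary.conjStarAlgAut_apply]; rfl
  have hnegspec : -A = U * Matrix.diagonal (fun i => -((hH.eigenvalues i : ℝ) : ℂ)) * star U := by
    conv_lhs => rw [hspec]
    have : Matrix.diagonal (fun i => -((hH.eigenvalues i : ℝ) : ℂ))
        = -Matrix.diagonal (fun i => ((hH.eigenvalues i : ℝ) : ℂ)) := by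
      rw [Matrix.diagonal_neg]
    rw [this, Matrix.mul_neg, Matrix.neg_mul]
  have h1 : A.charpoly.roots = Multiset.map (fun i => ((hH.eigenvalues i : ℝ) : ℂ))
      Finset.univ.val := by
    conv_lhs => rw [hspec]
    exact charpoly_diag_conj U hU _
  have h2 : (-A).charpoly.roots = Multiset.map (fun i => -((hH.eigenvalues i : ℝ) : ℂ))
      Finset.univ.val := by
    conv_lhs => rw [hnegspec]
    exact charpoly_diag_conj U hU _
  have h3 : A.charpoly = (-A).charpoly := by
    rw [← hskew, charpoly_transpose_aux]
  have key : Multiset.map (fun i => ((hH.eigenvalues i : ℝ) : ℂ)) Finset.univ.val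
      = Multiset.map (fun i => -((hH.eigenvalues i : ℝ) : ℂ)) Finset.univ.val := by
    rw [← h1, ← h2, h3]
  have key2 : Multiset.map (fun x : ℝ => (x : ℂ)) (Multiset.map hH.eigenvalues Finset.univ.val)
      = Multiset.map (fun x : ℝ => (x : ℂ))
        (Multiset.map (fun i => - hH.eigenvalues i) Finset.univ.val) := by
    rw [Multiset.map_map, Multiset.map_map]
    simpa [Function.comp, Complex.ofReal_neg] using key
  exact Multiset.map_injective Complex.ofReal_injective key2
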